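/- Let M = ν·B(α,n) where B(α,n) is the Basic Mixing Matrix, ν > 0, α > -1, and let G = γ·Id with γ > 0. Then the solution of dI/dt = (M - G)I with initial condition I(0) = I₀·e_i (the i-th standard basis vector scaled by I₀ > 0) is I(t) = (I₀/n)·e^{λt}·(v₁ - e^{-(λ - λ̃)t}·v_i), where λ = ν(n+α) - γ and λ̃ = να - γ, v₁ is the all-ones vector and v_i has entries 1 except 1-n in position i. -/

import Mathlib

/-- The Basic Mixing Matrix: off-diagonal entries 1, diagonal entries 1+α. -/
def basicMixingMatrix (α : ℝ) (n : ℕ) : Matrix (Fin n) (Fin n) ℝ :=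
  fun i j => if i = j then 1 + α else 1

/-- The claimed solution of the linearized epidemic:
I(t) = (I₀/n) e^{λ t} (v₁ - e^{-(λ - λ̃) t} vᵢ). -/
noncomputable def claimedSolution (ν α γ I₀ : ℝ) (n : ℕ) (i : Fin n) :
    ℝ → (Fin n → ℝ) :=
  fun t => (I₀ / n) • (Real.exp ((ν * (n + α) - γ) * t) •
    ((fun _ : Fin n => (1 : ℝ)) -
      Real.exp (-(((ν * (n + α) - γ) - (ν * α - γ))) * t) •
        (fun j : Fin n => if j = i then 1 - (n : ℝ) else 1)))

lemma claimedSolution_apply (ν α γ I₀ : ℝ) (n : ℕ) (i : Fin n) (s : ℝ) (j : Fin n) :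
    claimedSolution ν α γ I₀ n i s j =
      (I₀ / n) * (Real.exp ((ν * (n + α) - γ) * s) -
        Real.exp ((ν * α - γ) * s) * (if j = i then 1 - (n : ℝ) else 1)) := by
  have key : Real.exp ((ν * (n + α) - γ) * s) *
      Real.exp (-(((ν * (n + α) - γ) - (ν * α - γ))) * s) = Real.exp ((ν * α - γ) * s) := by
    rw [← Real.exp_add]; congr 1; ring
  simp only [claimedSolution, Pi.smul_apply, Pi.sub_apply, smul_eq_mul, mul_one]
  rw [mul_sub, mul_one, ← mul_assoc, key]

lemma sum_corr (n : ℕ) (i : Fin n) :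
    ∑ k : Fin n, (if k = i then 1 - (n : ℝ) else 1) = 0 := by
  have h : ∀ k : Fin n, (if k = i then 1 - (n : ℝ) else 1)
      = 1 + (if k = i then -(n : ℝ) else 0) := by
    intro k; by_cases h : k = i <;> simp [h] <;> ring
  simp [h, Finset.sum_add_distrib, Finset.sum_ite_eq']

theorem claimedSolution_solves_ODE (ν α γ I₀ : ℝ) (n : ℕ) (i : Fin n)
    (hν : ν > 0) (hα : α > -1) (hγ : γ > 0) (hI₀ : I₀ > 0) (hn : 1 ≤ n) :
    claimedSolution ν α γ I₀ n i 0 = I₀ • (Pi.single i 1 : Fin n → ℝ) ∧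
    ∀ (t : ℝ) (j : Fin n),
      HasDerivAt (fun s => claimedSolution ν α γ I₀ n i s j)
        (((ν • basicMixingMatrix α n - γ • (1 : Matrix (Fin n) (Fin n) ℝ)).mulVec
          (claimedSolution ν α γ I₀ n i t)) j) t := by
  have hn0 : (n : ℝ) ≠ 0 := by positivity
  set lam := ν * ((n : ℝ) + α) - γ with hlam
  set mu := ν * α - γ with hmu
  constructor
  · funext j
    rw [claimedSolution_apply]
    by_cases h : j = i
    · subst h
      simp [hn0]
    · simp [h, Pi.single_apply]
  · intro t j
    have hmv : ((ν • basicMixingMatrix α n - γ • (1 : Matrix (Fin n) (Fin n) ℝ)).mulVec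
          (claimedSolution ν α γ I₀ n i t)) j
        = ν * (∑ k, claimedSolution ν α γ I₀ n i t k)
          + (ν * α - γ) * claimedSolution ν α γ I₀ n i t j := by
      have hentry : ∀ k, (ν • basicMixingMatrix α n
            - γ • (1 : Matrix (Fin n) (Fin n) ℝ)) j k * claimedSolution ν α γ I₀ n i t k
          = ν * claimedSolution ν α γ I₀ n i t k
            + (if j = k then (ν * α - γ) * claimedSolution ν α γ I₀ n i t k else 0) := by
        intro k
        by_cases h : j = k <;>
          simp [basicMixingMatrix, Matrix.one_apply, h] <;> ring
      simp only [Matrix.mulVec, dotProduct]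
      rw [Finset.sum_congr rfl (fun k _ => hentry k), Finset.sum_add_distrib,
        Finset.sum_ite_eq, Finset.mul_sum]
      simp
    have hsum : (∑ k, claimedSolution ν α γ I₀ n i t k)
        = (I₀ / n) * ((n : ℝ) * Real.exp (lam * t)) := by
      simp only [claimedSolution_apply, ← hlam, ← hmu]
      rw [← Finset.mul_sum]
      congr 1
      rw [Finset.sum_sub_distrib, ← Finset.mul_sum, sum_corr]
      simp [mul_comm]
    rw [hmv, hsum, claimedSolution_apply, ← hlam, ← hmu]
    have hderiv : HasDerivAt (fun s => claimedSolution ν α γ I₀ n i s j)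
        ((I₀ / n) * (lam * Real.exp (lam * t)
          - mu * Real.exp (mu * t) * (if j = i then 1 - (n : ℝ) else 1))) t := by
      have h1 : HasDerivAt (fun s : ℝ => Real.exp (lam * s))
          (Real.exp (lam * t) * lam) t := by
        simpa using ((hasDerivAt_id t).const_mul lam).exp
      have h2 : HasDerivAt (fun s : ℝ => Real.exp (mu * s))
          (Real.exp (mu * t) * mu) t := by
        simpa using ((hasDerivAt_id t).const_mul mu).exp
      have h3 := ((h1.sub (h2.mul_const (if j = i then 1 - (n : ℝ) else 1))).const_mul
        (I₀ / n))
      simp only [claimedSolution_apply, ← hlam, ← hmu]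
      refine h3.congr_deriv ?_
      ring
    convert hderiv using 1
    ring
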